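/- arXiv:1904.03788 — 2 statements merged into one kernel-verified Lean document; each statement's English description precedes it below -/
import Mathlib

section
/- If H is an infinite discrete subgroup of the isometry group of the Euclidean plane ℝ², then H contains a nontrivial translation or a glide reflection (an orientation-reversing isometry whose square is a nontrivial translation). -/
noncomputable section

/-- The Euclidean plane. -/
abbrev Plane := EuclideanSpace ℝ (Fin 2)

/-- The isometry group of the Euclidean plane. -/
abbrev Isom := Plane ≃ᵢ Plane

/-- The compact-open topology on the isometry group. -/
instance : TopologicalSpace Isom :=
  TopologicalSpace.induced (fun f => (⟨f, f.continuous⟩ : C(Plane, Plane))) ContinuousMap.compactOpen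

/-- A (nontrivial) translation: `x ↦ x + v` with `v ≠ 0`. -/
def IsTranslation (f : Isom) : Prop := ∃ v : Plane, v ≠ 0 ∧ ∀ x, f x = x + v

/-- The linear part of an isometry of the plane (via Mazur–Ulam). -/
def linPart (f : Isom) : Plane ≃ₗᵢ[ℝ] Plane := f.toRealAffineIsometryEquiv.linearIsometryEquiv

/-- An isometry is orientation-reversing if its linear part has determinant `-1`. -/
def IsOrientationReversing (f : Isom) : Prop :=
  LinearMap.det ((linPart f).toLinearEquiv : Plane →ₗ[ℝ] Plane) = -1

/-- A glide reflection: an orientation-reversing isometry whose square is a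
nontrivial translation. -/
def IsGlide (f : Isom) : Prop := IsOrientationReversing f ∧ IsTranslation (f * f)

/-! ### Auxiliary material -/

namespace IsomAux

lemma linPart_sub (f : Isom) (x y : Plane) : linPart f (x - y) = f x - f y := by
  have := f.toRealAffineIsometryEquiv.map_vsub x y
  simpa [linPart] using this

lemma coe_mul (f g : Isom) (x : Plane) : (f * g) x = f (g x) := rfl

lemma linPart_mul (f g : Isom) (x : Plane) :
    linPart (f * g) x = linPart f (linPart g x) := by
  have h1 := linPart_sub (f * g) x 0
  have h2 := linPart_sub f (g x) (g 0)
  have h3 := linPart_sub g x 0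
  simp only [sub_zero] at h1 h3
  rw [h1, coe_mul, coe_mul, ← h2, h3]

lemma linPart_one (x : Plane) : linPart 1 x = x := by
  have := linPart_sub 1 x 0
  simpa using this

lemma apply_eq (f : Isom) (x : Plane) : f x = linPart f x + f 0 := by
  have := linPart_sub f x 0
  simp only [sub_zero] at this
  rw [this]; abel

def ee (i : Fin 2) : Plane := EuclideanSpace.single i 1

def dt (T : Plane ≃ₗᵢ[ℝ] Plane) : ℝ := LinearMap.det (T.toLinearEquiv : Plane →ₗ[ℝ] Plane)

lemma coords (x : Plane) : x = x 0 • ee 0 + x 1 • ee 1 := by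
  ext j
  fin_cases j <;> simp [ee, EuclideanSpace.single_apply]

lemma apply_coord (T : Plane ≃ₗᵢ[ℝ] Plane) (x : Plane) (i : Fin 2) :
    T x i = x 0 * T (ee 0) i + x 1 * T (ee 1) i := by
  conv_lhs => rw [coords x]
  simp [map_add, map_smul]

lemma inner_comp (x y : Plane) : inner ℝ x y = x 0 * y 0 + x 1 * y 1 := by
  simp [PiLp.inner_apply, Fin.sum_univ_two]
  ring

lemma ortho (T : Plane ≃ₗᵢ[ℝ] Plane) :
    T (ee 0) 0 ^ 2 + T (ee 0) 1 ^ 2 = 1 ∧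
    T (ee 1) 0 ^ 2 + T (ee 1) 1 ^ 2 = 1 ∧
    T (ee 0) 0 * T (ee 1) 0 + T (ee 0) 1 * T (ee 1) 1 = 0 := by
  have h00 : inner ℝ (T (ee 0)) (T (ee 0)) = inner ℝ (ee 0) (ee 0) := T.inner_map_map _ _
  have h11 : inner ℝ (T (ee 1)) (T (ee 1)) = inner ℝ (ee 1) (ee 1) := T.inner_map_map _ _
  have h01 : inner ℝ (T (ee 0)) (T (ee 1)) = inner ℝ (ee 0) (ee 1) := T.inner_map_map _ _
  rw [inner_comp, inner_comp] at h00 h11 h01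
  simp only [ee] at *
  simp [EuclideanSpace.single_apply] at h00 h11 h01
  exact ⟨by nlinarith, by nlinarith, by linarith⟩

lemma det_formula (T : Plane ≃ₗᵢ[ℝ] Plane) :
    dt T = T (ee 0) 0 * T (ee 1) 1 - T (ee 1) 0 * T (ee 0) 1 := by
  rw [dt, ← LinearMap.det_toMatrix (EuclideanSpace.basisFun (Fin 2) ℝ).toBasis, Matrix.det_fin_two]
  simp [LinearMap.toMatrix_apply, ee, EuclideanSpace.basisFun_apply]

lemma det_pm (T : Plane ≃ₗᵢ[ℝ] Plane) : dt T = 1 ∨ dt T = -1 := by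
  obtain ⟨h1, h2, h3⟩ := ortho T
  have hd := det_formula T
  have : (dt T - 1) * (dt T + 1) = 0 := by
    linear_combination (dt T + (T (ee 0) 0 * T (ee 1) 1 - T (ee 1) 0 * T (ee 0) 1)) * hd +
      (T (ee 1) 0 ^ 2 + T (ee 1) 1 ^ 2) * h1 + h2 -
      (T (ee 0) 0 * T (ee 1) 0 + T (ee 0) 1 * T (ee 1) 1) * h3
  rcases mul_eq_zero.mp this with h | h
  · left; linarith
  · right; linarith

lemma rot_coeffs (T : Plane ≃ₗᵢ[ℝ] Plane) (h : dt T = 1) :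
    T (ee 1) 0 = -(T (ee 0) 1) ∧ T (ee 1) 1 = T (ee 0) 0 := by
  obtain ⟨h1, h2, h3⟩ := ortho T
  have hd := det_formula T
  rw [h] at hd
  constructor
  · linear_combination T (ee 0) 0 * h3 - T (ee 0) 1 * (-hd) - T (ee 1) 0 * h1
  · linear_combination T (ee 0) 1 * h3 + T (ee 0) 0 * (-hd) - T (ee 1) 1 * h1

lemma rot_comm (T S : Plane ≃ₗᵢ[ℝ] Plane) (hT : dt T = 1) (hS : dt S = 1) (x : Plane) :
    T (S x) = S (T x) := by
  obtain ⟨hb, hd⟩ := rot_coeffs T hT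
  obtain ⟨hb', hd'⟩ := rot_coeffs S hS
  ext i
  fin_cases i <;>
  · simp only [Fin.zero_eta, Fin.mk_one]
    rw [apply_coord T (S x), apply_coord S x, apply_coord S x,
      apply_coord S (T x), apply_coord T x, apply_coord T x]
    rw [hb, hd, hb', hd']
    ring

lemma isom_ext (f : Isom) (h : ∀ x, f x = x) : f = 1 :=
  IsometryEquiv.ext fun x => by rw [h x]; rfl

lemma key1 (f : Isom) (hA : ∀ x, linPart f x = x) (hnt : ¬ IsTranslation f) : f = 1 := by
  by_cases h0 : f 0 = 0
  · exact isom_ext f fun x => by rw [apply_eq f x, hA, h0, add_zero]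
  · exact absurd ⟨f 0, h0, fun x => by rw [apply_eq f x, hA]⟩ hnt

lemma sub_apply (x y : Plane) (i : Fin 2) : (x - y) i = x i - y i := rfl

lemma fixed_of (f : Isom) (hdet : dt (linPart f) = 1) (hne : f ≠ 1) (hnt : ¬ IsTranslation f) :
    ∃ p : Plane, f p = p ∧ ∀ q, f q = q → q = p := by
  obtain ⟨a, ha⟩ : ∃ r, linPart f (ee 0) 0 = r := ⟨_, rfl⟩
  obtain ⟨c, hc⟩ : ∃ r, linPart f (ee 0) 1 = r := ⟨_, rfl⟩
  have hb : linPart f (ee 1) 0 = -c := by rw [← hc]; exact (rot_coeffs _ hdet).1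
  have hd : linPart f (ee 1) 1 = a := by rw [← ha]; exact (rot_coeffs _ hdet).2
  obtain ⟨t0, ht0⟩ : ∃ r, f 0 0 = r := ⟨_, rfl⟩
  obtain ⟨t1, ht1⟩ : ∃ r, f 0 1 = r := ⟨_, rfl⟩
  have hD : (1 - a) ^ 2 + c ^ 2 ≠ 0 := by
    intro h0
    have ha1 : a = 1 := by nlinarith [sq_nonneg (1 - a), sq_nonneg c]
    have hc0 : c = 0 := by nlinarith [sq_nonneg (1 - a), sq_nonneg c]
    refine hne (key1 f (fun x => ?_) hnt)
    ext i
    fin_cases i <;>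
    · simp only [Fin.zero_eta, Fin.mk_one]
      rw [apply_coord (linPart f) x]
      simp only [ha, hc, hb, hd, ha1, hc0]
      ring
  set p : Plane := (WithLp.equiv 2 (Fin 2 → ℝ)).symm
      ![((1 - a) * t0 - c * t1) / ((1 - a) ^ 2 + c ^ 2),
        (c * t0 + (1 - a) * t1) / ((1 - a) ^ 2 + c ^ 2)] with hpdef
  have hpe0 : p 0 = ((1 - a) * t0 - c * t1) / ((1 - a) ^ 2 + c ^ 2) := rfl
  have hpe1 : p 1 = (c * t0 + (1 - a) * t1) / ((1 - a) ^ 2 + c ^ 2) := rfl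
  have happ : ∀ (x : Plane) (i : Fin 2), f x i = linPart f x i + f 0 i := by
    intro x i; rw [apply_eq f x]; rfl
  have hfix : f p = p := by
    ext i
    rw [happ p i, apply_coord (linPart f) p]
    fin_cases i <;>
    · simp only [Fin.zero_eta, Fin.mk_one]
      simp only [ha, hc, hb, hd, ht0, ht1, hpe0, hpe1]
      field_simp
      ring
  refine ⟨p, hfix, fun q hq => ?_⟩
  have hqp : linPart f (q - p) = q - p := by rw [linPart_sub f q p, hq, hfix]
  have h0 : linPart f (q - p) 0 = (q - p) 0 := by rw [hqp]
  have h1 : linPart f (q - p) 1 = (q - p) 1 := by rw [hqp]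
  rw [apply_coord (linPart f)] at h0 h1
  simp only [sub_apply, ha, hc, hb, hd] at h0 h1
  have hw0 : q 0 - p 0 = 0 := by
    have h : ((1 - a) ^ 2 + c ^ 2) * (q 0 - p 0) = 0 := by
      linear_combination (a - 1) * h0 + c * h1
    exact (mul_eq_zero.mp h).resolve_left hD
  have hw1 : q 1 - p 1 = 0 := by
    have h : ((1 - a) ^ 2 + c ^ 2) * (q 1 - p 1) = 0 := by
      linear_combination (-c) * h0 + (a - 1) * h1
    exact (mul_eq_zero.mp h).resolve_left hD
  ext i
  fin_cases i <;>
  · simp only [Fin.zero_eta, Fin.mk_one]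
    first
    | linarith [hw0]
    | linarith [hw1]

lemma dt_mul (f g : Isom) : dt (linPart (f * g)) = dt (linPart f) * dt (linPart g) := by
  have hcomp : ((linPart (f * g)).toLinearEquiv : Plane →ₗ[ℝ] Plane)
      = ((linPart f).toLinearEquiv : Plane →ₗ[ℝ] Plane) ∘ₗ
        ((linPart g).toLinearEquiv : Plane →ₗ[ℝ] Plane) :=
    LinearMap.ext fun x => by simpa using linPart_mul f g x
  rw [dt, hcomp, LinearMap.det_comp]
  rfl

lemma dt_one : dt (linPart (1 : Isom)) = 1 := by
  have hid : ((linPart (1 : Isom)).toLinearEquiv : Plane →ₗ[ℝ] Plane) = LinearMap.id :=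
    LinearMap.ext fun x => by simpa using linPart_one x
  rw [dt, hid, LinearMap.det_id]

lemma nhds_crit (U : Set Isom) (hU : U ∈ nhds (1 : Isom)) :
    ∃ (K : Set Plane) (ε : ℝ), IsCompact K ∧ 0 < ε ∧
      ∀ g : Isom, (∀ x ∈ K, dist x (g x) < ε) → g ∈ U := by
  rw [nhds_induced] at hU
  obtain ⟨W, hW, hWU⟩ := hU
  rw [UniformSpace.mem_nhds_iff] at hW
  obtain ⟨V, hV, hball⟩ := hW
  rw [ContinuousMap.mem_compactConvergence_entourage_iff] at hV
  obtain ⟨K, V₀, hK, hV₀, hsub⟩ := hV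
  obtain ⟨ε, hε, hd⟩ := Metric.mem_uniformity_dist.mp hV₀
  refine ⟨K, ε, hK, hε, fun g hg => ?_⟩
  exact hWU (hball (hsub fun x hx => hd (hg x hx)))

end IsomAux

open IsomAux in
/-- An infinite discrete subgroup of `Isom(ℝ²)` contains a nontrivial translation
or a glide reflection. -/
theorem infinite_discrete_subgroup_contains_translation_or_glide
    (H : Subgroup Isom) (hinf : Infinite H) (hdisc : DiscreteTopology H) :
    ∃ f ∈ H, IsTranslation f ∨ IsGlide f := by
  by_contra hcon
  push_neg at hcon
  have hnt : ∀ f ∈ H, ¬ IsTranslation f := fun f hf ht => (hcon f hf).1 ht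
  -- the set of orientation-preserving elements is infinite
  set Sset : Set Isom := {f : Isom | f ∈ H ∧ dt (linPart f) = 1} with hSdef
  have hHinf : (H : Set Isom).Infinite := Set.infinite_coe_iff.mp hinf
  have hSinf : Sset.Infinite := by
    by_contra hfin
    rw [Set.not_infinite] at hfin
    set Sm : Set Isom := {f : Isom | f ∈ H ∧ dt (linPart f) = -1} with hSmdef
    have hcover : (H : Set Isom) ⊆ Sset ∪ Sm := by
      intro f hf
      rcases det_pm (linPart f) with h | h
      · exact Or.inl ⟨hf, h⟩
      · exact Or.inr ⟨hf, h⟩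
    have hSm : Sm.Infinite := by
      by_contra hfin2
      rw [Set.not_infinite] at hfin2
      exact (hHinf.mono hcover) (hfin.union hfin2)
    obtain ⟨r, hrH, hrd⟩ := hSm.nonempty
    have himg : (fun f => r * f) '' Sm ⊆ Sset := by
      rintro _ ⟨f, ⟨hfH, hfd⟩, rfl⟩
      refine ⟨H.mul_mem hrH hfH, ?_⟩
      rw [dt_mul, hrd, hfd]; norm_num
    have : Sset.Infinite :=
      ((hSm.image (fun x hx y hy h => mul_left_cancel h))).mono himg
    exact this hfin
  -- a nontrivial rotation and its fixed point
  obtain ⟨g₀, hg₀S, hg₀1⟩ := (hSinf.diff (Set.finite_singleton 1)).nonempty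
  have hg₀H : g₀ ∈ H := hg₀S.1
  have hg₀d : dt (linPart g₀) = 1 := hg₀S.2
  have hg₀ne : g₀ ≠ 1 := by simpa using hg₀1
  obtain ⟨p, hp, hpu⟩ := fixed_of g₀ hg₀d hg₀ne (hnt g₀ hg₀H)
  -- every orientation-preserving element fixes p
  have hfixall : ∀ f ∈ Sset, f p = p := by
    rintro f ⟨hfH, hfd⟩
    by_cases h1 : f = 1
    · rw [h1]; rfl
    have hdinv : dt (linPart f⁻¹) = 1 := by
      have h2 := dt_mul f f⁻¹
      rw [mul_inv_cancel, dt_one, hfd, one_mul] at h2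
      exact h2.symm
    have hAh : ∀ x, linPart (f * g₀ * f⁻¹ * g₀⁻¹) x = x := by
      intro x
      have e1 : ∀ y, linPart f (linPart f⁻¹ y) = y := fun y => by
        rw [← linPart_mul, mul_inv_cancel]; exact linPart_one y
      have e2 : ∀ y, linPart g₀ (linPart g₀⁻¹ y) = y := fun y => by
        rw [← linPart_mul, mul_inv_cancel]; exact linPart_one y
      rw [linPart_mul (f * g₀ * f⁻¹) g₀⁻¹, linPart_mul (f * g₀) f⁻¹, linPart_mul f g₀,
        rot_comm (linPart g₀) (linPart f⁻¹) hg₀d hdinv (linPart g₀⁻¹ x), e1, e2]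
    have hmem : f * g₀ * f⁻¹ * g₀⁻¹ ∈ H :=
      H.mul_mem (H.mul_mem (H.mul_mem hfH hg₀H) (H.inv_mem hfH)) (H.inv_mem hg₀H)
    have hone : f * g₀ * f⁻¹ * g₀⁻¹ = 1 := key1 _ hAh (hnt _ hmem)
    have hconj : f * g₀ * f⁻¹ = g₀ := mul_inv_eq_one.mp hone
    have hfp : g₀ (f p) = f p := by
      conv_lhs => rw [← hconj]
      rw [coe_mul, coe_mul]
      have hinvf : f⁻¹ (f p) = p := by
        rw [← coe_mul, inv_mul_cancel]; rfl
      rw [hinvf, hp]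
    exact hpu (f p) hfp
  -- the linear part map, as continuous linear maps
  set Φ : Isom → (Plane →L[ℝ] Plane) :=
    fun f => (linPart f).toLinearIsometry.toContinuousLinearMap with hΦdef
  have hΦapp : ∀ (f : Isom) (x : Plane), Φ f x = linPart f x := fun f x => rfl
  have hΦball : ∀ f : Isom, Φ f ∈ Metric.closedBall (0 : Plane →L[ℝ] Plane) 1 := by
    intro f
    rw [Metric.mem_closedBall, dist_zero_right]
    refine ContinuousLinearMap.opNorm_le_bound _ zero_le_one fun x => ?_
    rw [hΦapp, (linPart f).norm_map, one_mul]
  -- discreteness: a neighborhood of 1 meeting H only at 1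
  have h1H : ({(1 : H)} : Set H) ∈ nhds (1 : H) := by
    rw [nhds_discrete]; rfl
  rw [nhds_subtype] at h1H
  obtain ⟨t, htn, htsub⟩ := Filter.mem_comap.mp h1H
  have ht1 : ∀ f, f ∈ H → f ∈ t → f = 1 := by
    intro f hf hft
    have : (⟨f, hf⟩ : H) ∈ ({(1 : H)} : Set H) := htsub hft
    simpa [Subtype.ext_iff] using this
  have htn' : t ∈ nhds (1 : Isom) := by simpa using htn
  obtain ⟨K, ε, hK, hε, hcrit⟩ := nhds_crit t htn'
  -- a bound for K around p
  obtain ⟨r, hr⟩ := hK.isBounded.subset_closedBall p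
  set C : ℝ := max r 0 with hCdef
  have hC0 : 0 ≤ C := le_max_right r 0
  have hKC : ∀ x ∈ K, ‖x - p‖ ≤ C := by
    intro x hx
    have := hr hx
    rw [Metric.mem_closedBall] at this
    calc ‖x - p‖ = dist x p := (dist_eq_norm x p).symm
    _ ≤ r := this
    _ ≤ C := le_max_left r 0
  set ε' : ℝ := ε / (C + 1) with hε'def
  have hC1 : (0 : ℝ) < C + 1 := by linarith
  have hε' : 0 < ε' := div_pos hε hC1
  -- pigeonhole in the compact ball of operators
  have htb := (isCompact_closedBall (0 : Plane →L[ℝ] Plane) 1).totallyBounded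
  obtain ⟨tset, htfin, htcov⟩ := Metric.totallyBounded_iff.mp htb (ε' / 2) (by positivity)
  have hchoice : ∀ f : ↥Sset, ∃ y : ↥tset, Φ (f : Isom) ∈ Metric.ball (y : Plane →L[ℝ] Plane) (ε' / 2) := by
    rintro ⟨f, hf⟩
    have := htcov (hΦball f)
    simp only [Set.mem_iUnion] at this
    obtain ⟨y, hy, hmem⟩ := this
    exact ⟨⟨y, hy⟩, hmem⟩
  choose ψ hψ using hchoice
  haveI : Infinite ↥Sset := hSinf.to_subtype
  haveI : Finite ↥tset := htfin.to_subtype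
  obtain ⟨f₁, f₂, hne12, heq⟩ := Finite.exists_ne_map_eq_of_infinite ψ
  have hdist : ‖Φ (f₂ : Isom) - Φ (f₁ : Isom)‖ < ε' := by
    have d1 := hψ f₁
    have d2 := hψ f₂
    rw [heq] at d1
    rw [Metric.mem_ball] at d1 d2
    calc ‖Φ (f₂ : Isom) - Φ (f₁ : Isom)‖ = dist (Φ (f₂ : Isom)) (Φ (f₁ : Isom)) :=
          (dist_eq_norm _ _).symm
    _ ≤ dist (Φ (f₂ : Isom)) (ψ f₂ : Plane →L[ℝ] Plane) +
          dist (Φ (f₁ : Isom)) (ψ f₂ : Plane →L[ℝ] Plane) := dist_triangle_right _ _ _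
    _ < ε' / 2 + ε' / 2 := add_lt_add d2 d1
    _ = ε' := by ring
  -- the small nontrivial element
  set g' : Isom := (f₁ : Isom)⁻¹ * (f₂ : Isom) with hg'def
  have hf1S : (f₁ : Isom) ∈ Sset := f₁.2
  have hf2S : (f₂ : Isom) ∈ Sset := f₂.2
  have hg'H : g' ∈ H := H.mul_mem (H.inv_mem hf1S.1) hf2S.1
  have hg'ne : g' ≠ 1 := by
    intro h
    exact hne12 (Subtype.ext (inv_mul_eq_one.mp h))
  have hf1p : (f₁ : Isom) p = p := hfixall _ hf1S
  have hf2p : (f₂ : Isom) p = p := hfixall _ hf2S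
  have hg'p : g' p = p := by
    have hi : (f₁ : Isom)⁻¹ p = p := by
      conv_lhs => rw [← hf1p]
      rw [← coe_mul, inv_mul_cancel]; rfl
    rw [hg'def, coe_mul, hf2p, hi]
  have hclose : ∀ x ∈ K, dist x (g' x) < ε := by
    intro x hx
    have hsub1 : g' x - x = linPart g' (x - p) - (x - p) := by
      have h := linPart_sub g' x p
      rw [hg'p] at h
      rw [h]; abel
    have hkey : linPart (f₁ : Isom) (linPart g' (x - p)) = linPart (f₂ : Isom) (x - p) := by
      rw [← linPart_mul]
      congr 1
      rw [hg'def, mul_inv_cancel_left]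
    have hnorm : ‖g' x - x‖ = ‖(Φ (f₂ : Isom) - Φ (f₁ : Isom)) (x - p)‖ := by
      rw [hsub1, ← (linPart (f₁ : Isom)).norm_map (linPart g' (x - p) - (x - p)), map_sub, hkey,
        ContinuousLinearMap.sub_apply, hΦapp, hΦapp]
    have hb1 : ‖(Φ (f₂ : Isom) - Φ (f₁ : Isom)) (x - p)‖
        ≤ ‖Φ (f₂ : Isom) - Φ (f₁ : Isom)‖ * ‖x - p‖ := ContinuousLinearMap.le_opNorm _ _
    have hb2 : ‖Φ (f₂ : Isom) - Φ (f₁ : Isom)‖ * ‖x - p‖ ≤ ε' * C :=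
      mul_le_mul hdist.le (hKC x hx) (norm_nonneg _) hε'.le
    have hb3 : ε' * C < ε := by
      rw [hε'def, div_mul_eq_mul_div, div_lt_iff₀ hC1]
      nlinarith
    have hdx : dist x (g' x) = ‖g' x - x‖ := by rw [dist_eq_norm, norm_sub_rev]
    rw [hdx, hnorm]
    linarith
  exact hg'ne (ht1 g' hg'H (hcrit g' hclose))

end
end

section
/- If an infinite discrete group H of isometries of ℝ² is abelian and torsion-free, then H is generated by elements that are translations or glide reflections; in particular H contains a translation. -/
noncomputable section
open Matrix Metric

lemma linPart_add (f : Isom) (p x : Plane) : f (x + p) = linPart f x + f p := by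
  have := f.toRealAffineIsometryEquiv.map_vadd p x
  simpa [linPart] using this

lemma apply_eq (f : Isom) (p x : Plane) : f x = linPart f (x - p) + f p := by
  have := linPart_add f p (x - p); simpa using this

lemma linPart_apply (f : Isom) (x : Plane) : linPart f x = f x - f 0 := by
  have := apply_eq f 0 x; simp at this; rw [this]; simp

lemma linPart_mul (f g : Isom) (x : Plane) :
    linPart (f * g) x = linPart f (linPart g x) := by
  simp only [linPart_apply, IsometryEquiv.mul_apply, map_sub]
  have h1 := apply_eq f (g 0) (g x)
  simp [linPart_apply] at h1
  rw [h1]; abel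

def B : Module.Basis (Fin 2) ℝ Plane := PiLp.basisFun 2 ℝ (Fin 2)

def Mat (f : Isom) : Matrix (Fin 2) (Fin 2) ℝ :=
  LinearMap.toMatrix B B ((linPart f).toLinearEquiv : Plane →ₗ[ℝ] Plane)

lemma toLin_Mat (f : Isom) (x : Plane) : Matrix.toLin B B (Mat f) x = linPart f x := by
  rw [Mat, Matrix.toLin_toMatrix]; rfl

lemma mat_entry (f : Isom) (i j : Fin 2) : Mat f i j = (linPart f (B j)) i := by
  simp [Mat, LinearMap.toMatrix_apply, B, PiLp.basisFun_repr]

lemma orth (f : Isom) : (Mat f)ᵀ * Mat f = 1 := by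
  ext i j
  simp only [Matrix.mul_apply, Matrix.transpose_apply, Fin.sum_univ_two, mat_entry]
  have := (linPart f).inner_map_map (𝕜 := ℝ) (B i) (B j)
  simp only [PiLp.inner_apply, RCLike.inner_apply, starRingEnd_apply, star_trivial,
    Fin.sum_univ_two] at this
  rw [mul_comm ((linPart f (B i)) 0), mul_comm ((linPart f (B i)) 1), this]
  have hB : ∀ k l : Fin 2, B k l = if k = l then 1 else 0 := by
    intro k l
    simp [B, PiLp.basisFun_apply]
    exact if_congr eq_comm rfl rfl
  fin_cases i <;> fin_cases j <;> simp [hB, Matrix.one_apply]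

lemma det_Mat (f : Isom) :
    (Mat f).det = LinearMap.det ((linPart f).toLinearEquiv : Plane →ₗ[ℝ] Plane) :=
  LinearMap.det_toMatrix B _

section
variable (M : Matrix (Fin 2) (Fin 2) ℝ)

lemma entry_eq (h : Mᵀ * M = 1) (i j : Fin 2) :
    M 0 i * M 0 j + M 1 i * M 1 j = if i = j then 1 else 0 := by
  have := congrFun (congrFun h i) j
  simpa [Matrix.mul_apply, Fin.sum_univ_two, Matrix.one_apply] using this

lemma det_pm_one (h : Mᵀ * M = 1) : M.det = 1 ∨ M.det = -1 := by
  have h1 : M.det * M.det = 1 := by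
    have := congrArg Matrix.det h
    rwa [Matrix.det_mul, Matrix.det_transpose, Matrix.det_one] at this
  exact mul_self_eq_one_iff.mp h1

lemma sq_one_of_det_neg (h : Mᵀ * M = 1) (hd : M.det = -1) : M * M = 1 := by
  have e1 := entry_eq M h 0 0
  have e2 := entry_eq M h 0 1
  have e3 := entry_eq M h 1 1
  norm_num at e1 e2 e3
  rw [Matrix.det_fin_two] at hd
  have hbc : M 0 1 = M 1 0 := by linear_combination -(M 1 1 * e2) + M 0 1 * hd + M 1 0 * e3
  have had : M 1 1 = -M 0 0 := by linear_combination M 1 0 * e2 + M 0 0 * hd - M 1 1 * e1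
  ext i j
  fin_cases i <;> fin_cases j <;>
    simp only [Matrix.mul_apply, Fin.sum_univ_two, Matrix.one_apply] <;> norm_num
  · linear_combination e1 + M 1 0 * hbc
  · linear_combination M 0 1 * had
  · linear_combination M 1 0 * had
  · linear_combination e3 - M 0 1 * hbc

lemma det_sub_ne_zero (h : Mᵀ * M = 1) (hd : M.det = 1) (hM : M ≠ 1) :
    (1 - M).det ≠ 0 := by
  have e1 := entry_eq M h 0 0
  have e2 := entry_eq M h 0 1
  have e3 := entry_eq M h 1 1
  norm_num at e1 e2 e3
  rw [Matrix.det_fin_two] at hd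
  intro h0
  apply hM
  rw [Matrix.det_fin_two] at h0
  simp only [Matrix.sub_apply, Matrix.one_apply] at h0
  norm_num at h0
  have hda : M 1 1 = M 0 0 := by linear_combination M 1 0 * e2 + M 0 0 * hd - M 1 1 * e1
  have hcb : M 1 0 = -M 0 1 := by linear_combination M 1 1 * e2 - M 0 1 * hd - M 1 0 * e3
  rw [hda, hcb] at h0
  have ka : (1 - M 0 0)^2 + (M 0 1)^2 = 0 := by linear_combination h0
  have h1 : (1 - M 0 0)^2 ≤ 0 := by nlinarith [sq_nonneg (M 0 1)]
  have h2 : (M 0 1)^2 ≤ 0 := by nlinarith [sq_nonneg (1 - M 0 0)]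
  have ha : M 0 0 = 1 := by
    have := sq_eq_zero_iff.mp (le_antisymm h1 (sq_nonneg _)); linarith
  have hb : M 0 1 = 0 := sq_eq_zero_iff.mp (le_antisymm h2 (sq_nonneg _))
  ext i j
  fin_cases i <;> fin_cases j <;> simp [Matrix.one_apply] <;>
    simp [ha, hb] at hda hcb ⊢ <;> linarith
end

lemma trichotomy (f : Isom) (hf1 : f ≠ 1) (hf2 : f * f ≠ 1) :
    IsTranslation f ∨ IsGlide f ∨ (∃ p, f p = p ∧ ∀ q, f q = q → q = p) := by
  rcases det_pm_one (Mat f) (orth f) with hd | hd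
  · -- det = 1 : translation or rotation
    by_cases hM : Mat f = 1
    · -- translation
      left
      have hA : ∀ x, linPart f x = x := by
        intro x
        rw [← toLin_Mat, hM]
        simp
      refine ⟨f 0, ?_, ?_⟩
      · intro h0
        apply hf1
        apply IsometryEquiv.ext
        intro x
        have := apply_eq f 0 x
        rw [hA] at this
        simp only [this, h0, IsometryEquiv.coe_one, id_eq]
        abel
      · intro x
        have := apply_eq f 0 x
        rw [hA] at this
        rw [this]; abel
    · -- rotation: unique fixed point
      right; right
      have hdet : (1 - Mat f).det ≠ 0 := det_sub_ne_zero _ (orth f) hd hM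
      have hu : IsUnit (1 - Mat f).det := isUnit_iff_ne_zero.mpr hdet
      set N := (1 - Mat f)⁻¹ with hN
      have hNr : (1 - Mat f) * N = 1 := Matrix.mul_nonsing_inv _ hu
      have hNl : N * (1 - Mat f) = 1 := Matrix.nonsing_inv_mul _ hu
      set p := Matrix.toLin B B N (f 0) with hp
      have key : ∀ y : Plane, Matrix.toLin B B (1 - Mat f) y = y - linPart f y := by
        intro y
        rw [map_sub (Matrix.toLin B B)]
        simp [toLin_Mat]
      have hfix : f p = p := by
        have h1 : Matrix.toLin B B (1 - Mat f) p = f 0 := by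
          rw [hp, ← LinearMap.comp_apply, ← Matrix.toLin_mul B B B, hNr]
          simp
        rw [key] at h1
        have := apply_eq f 0 p
        simp only [sub_zero] at this
        rw [this]
        have : linPart f p = p - f 0 := by
          rw [← h1]; abel
        rw [this]; abel
      refine ⟨p, hfix, ?_⟩
      intro q hq
      have h1 : Matrix.toLin B B (1 - Mat f) q = f 0 := by
        rw [key]
        have := apply_eq f 0 q
        simp only [sub_zero] at this
        rw [hq] at this
        exact sub_eq_iff_eq_add'.mpr this
      have : q = Matrix.toLin B B N (f 0) := by
        rw [← h1, ← LinearMap.comp_apply, ← Matrix.toLin_mul B B B, hNl]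
        simp
      rw [this]
  · -- det = -1 : glide
    right; left
    constructor
    · rw [IsOrientationReversing, ← det_Mat, hd]
    · have hsq : Mat f * Mat f = 1 := sq_one_of_det_neg _ (orth f) hd
      have hA : ∀ x, linPart (f * f) x = x := by
        intro x
        rw [linPart_mul, ← toLin_Mat, ← toLin_Mat, ← LinearMap.comp_apply, ← Matrix.toLin_mul B B B, hsq]
        simp
      refine ⟨(f * f) 0, ?_, ?_⟩
      · intro h0
        apply hf2
        apply IsometryEquiv.ext
        intro x
        have := apply_eq (f * f) 0 x
        rw [hA] at this
        simp only [this, h0, IsometryEquiv.coe_one, id_eq]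
        abel
      · intro x
        have := apply_eq (f * f) 0 x
        rw [hA] at this
        rw [this]; abel


open Metric

/-- The embedding into continuous maps. -/
def emb (f : Isom) : C(Plane, Plane) := ⟨f, f.continuous⟩

lemma exists_nbhd (H : Subgroup Isom) (hdisc : DiscreteTopology H) :
    ∃ (K : Set Plane) (ε : ℝ), IsCompact K ∧ 0 < ε ∧
      ∀ g : Isom, g ∈ H → (∀ x ∈ K, dist (g x) x < ε) → g = 1 := by
  have hopen : IsOpen ({1} : Set H) := isOpen_discrete _
  rw [isOpen_induced_iff] at hopen
  obtain ⟨U, hUopen, hU⟩ := hopen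
  rw [isOpen_induced_iff] at hUopen
  obtain ⟨W, hWopen, hW⟩ := hUopen
  have h1U : (1 : Isom) ∈ U := by
    have : ((1 : H) : Isom) ∈ U := by
      have : (1 : H) ∈ ((Subtype.val) ⁻¹' U : Set H) := by rw [hU]; rfl
      exact this
    simpa using this
  have h1W : emb 1 ∈ W := by
    rw [← hW] at h1U; exact h1U
  have hWn : W ∈ nhds (emb 1) := hWopen.mem_nhds h1W
  rw [UniformSpace.mem_nhds_iff] at hWn
  obtain ⟨V, hV, hball⟩ := hWn
  rw [ContinuousMap.mem_compactConvergence_entourage_iff] at hV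
  obtain ⟨K, V', hK, hV', hsub⟩ := hV
  obtain ⟨ε, hε, hdist⟩ := Metric.mem_uniformity_dist.mp hV'
  refine ⟨K, ε, hK, hε, ?_⟩
  intro g hg hgK
  have hmem : emb g ∈ W := by
    apply hball
    apply hsub
    intro x hx
    simp only [emb, ContinuousMap.coe_mk]
    have : dist ((1 : Isom) x) (g x) < ε := by
      simpa [dist_comm] using hgK x hx
    exact hdist this
  have hgU : g ∈ U := by rw [← hW]; exact hmem
  have : (⟨g, hg⟩ : H) ∈ (Subtype.val ⁻¹' U : Set H) := hgU
  rw [hU] at this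
  simpa using congrArg Subtype.val this

lemma coord_abs_le_norm (w : Plane) (i : Fin 2) : |w i| ≤ ‖w‖ := by
  rw [EuclideanSpace.norm_eq]
  rw [show |w i| = Real.sqrt (|w i| ^ 2) by rw [Real.sqrt_sq_eq_abs]; rw [abs_abs]]
  apply Real.sqrt_le_sqrt
  fin_cases i <;> simp [Fin.sum_univ_two] <;> positivity

lemma decomp (w : Plane) : w = w 0 • B 0 + w 1 • B 1 := by
  have hB : ∀ k l : Fin 2, B k l = if k = l then 1 else 0 := by
    intro k l
    simp [B, PiLp.basisFun_apply]
    exact if_congr eq_comm rfl rfl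
  ext i
  fin_cases i <;> simp [hB]

lemma estimate (g : Isom) (p : Plane) (hp : g p = p) (δ R : ℝ) (hR : 0 ≤ R)
    (h1 : dist (g (B 0 + p)) (B 0 + p) ≤ δ) (h2 : dist (g (B 1 + p)) (B 1 + p) ≤ δ)
    (x : Plane) (hx : ‖x - p‖ ≤ R) : dist (g x) x ≤ 2 * R * δ := by
  have hδ : 0 ≤ δ := le_trans dist_nonneg h1
  set w : Plane := x - p with hw
  set A := linPart g with hA
  have hgx : g x = A w + p := by
    have := apply_eq g p x
    rw [this, hp]
  have hb : ∀ i : Fin 2, A (B i) - B i = g (B i + p) - (B i + p) := by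
    intro i
    have h := linPart_add g p (B i)
    rw [hp] at h
    rw [hA, h]; abel
  have key : g x - x = w 0 • (A (B 0) - B 0) + w 1 • (A (B 1) - B 1) := by
    rw [hgx]
    have hwx : x = w + p := by rw [hw]; abel
    calc A w + p - x = A w - w := by rw [hwx]; abel
    _ = A (w 0 • B 0 + w 1 • B 1) - (w 0 • B 0 + w 1 • B 1) := by rw [← decomp]
    _ = w 0 • (A (B 0) - B 0) + w 1 • (A (B 1) - B 1) := by
        rw [map_add, _root_.map_smul, _root_.map_smul]; module
  rw [dist_eq_norm, key]
  have hn : ∀ i : Fin 2, ‖A (B i) - B i‖ ≤ δ := by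
    intro i
    rw [hb i, ← dist_eq_norm]
    fin_cases i <;> assumption
  calc ‖w 0 • (A (B 0) - B 0) + w 1 • (A (B 1) - B 1)‖
      ≤ ‖w 0 • (A (B 0) - B 0)‖ + ‖w 1 • (A (B 1) - B 1)‖ := norm_add_le _ _
    _ = |w 0| * ‖A (B 0) - B 0‖ + |w 1| * ‖A (B 1) - B 1‖ := by
        rw [norm_smul, norm_smul]; simp [Real.norm_eq_abs]
    _ ≤ R * δ + R * δ := by
        have h0 := coord_abs_le_norm w 0
        have h1' := coord_abs_le_norm w 1
        have := hn 0; have := hn 1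
        gcongr <;> [exact le_trans h0 hx; exact le_trans h1' hx]
    _ = 2 * R * δ := by ring

lemma B_entry (k l : Fin 2) : B k l = if k = l then 1 else 0 := by
  simp [B, PiLp.basisFun_apply]
  exact if_congr eq_comm rfl rfl

lemma norm_B (i : Fin 2) : ‖B i‖ = 1 := by
  rw [EuclideanSpace.norm_eq]
  rw [show ∑ j, ‖B i j‖ ^ 2 = 1 from by fin_cases i <;> simp [Fin.sum_univ_two, B_entry]]
  exact Real.sqrt_one

lemma exists_small (H : Subgroup Isom) (hinf : Infinite H) (p : Plane)
    (hfix : ∀ g ∈ H, (g : Isom) p = p) (δ : ℝ) (hδ : 0 < δ) :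
    ∃ g : Isom, g ∈ H ∧ g ≠ 1 ∧ dist (g (B 0 + p)) (B 0 + p) < δ ∧
      dist (g (B 1 + p)) (B 1 + p) < δ := by
  have hd : ∀ (h : Isom), h ∈ H → ∀ i : Fin 2, dist (h (B i + p)) p ≤ 1 := by
    intro h hh i
    have heq : dist (h (B i + p)) (h p) = dist (B i + p) p := IsometryEquiv.dist_eq h _ _
    rw [hfix h hh] at heq
    rw [heq, dist_eq_norm]
    simp [norm_B i]
  set hseq : ℕ → H := fun n => (Infinite.natEmbedding H) n with hhseq
  have hinj : Function.Injective hseq := (Infinite.natEmbedding H).injective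
  set x : ℕ → Plane × Plane :=
    fun n => ((hseq n : Isom) (B 0 + p), (hseq n : Isom) (B 1 + p)) with hx
  have hmem : ∀ n, x n ∈ (Metric.closedBall p 1) ×ˢ (Metric.closedBall p 1) := by
    intro n
    exact ⟨hd _ (hseq n).2 0, hd _ (hseq n).2 1⟩
  have hS : IsCompact ((Metric.closedBall p 1) ×ˢ (Metric.closedBall p 1) : Set (Plane × Plane)) :=
    (isCompact_closedBall p 1).prod (isCompact_closedBall p 1)
  obtain ⟨a, -, φ, hφ, hconv⟩ := hS.tendsto_subseq hmem
  obtain ⟨N, hN⟩ := Metric.tendsto_atTop.mp hconv (δ / 2) (by positivity)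
  set h : H := hseq (φ N) with hh
  set h' : H := hseq (φ (N + 1)) with hh'
  have hne : (h : Isom) ≠ (h' : Isom) := by
    intro heq
    have h1 : h = h' := Subtype.ext heq
    have h2 : φ N = φ (N + 1) := hinj h1
    have := hφ (by omega : N < N + 1)
    omega
  have hdN : dist (x (φ N)) a < δ / 2 := hN N le_rfl
  have hdN1 : dist (x (φ (N + 1))) a < δ / 2 := hN (N + 1) (Nat.le_succ N)
  have fst_le : ∀ u : Plane × Plane, dist u.1 a.1 ≤ dist u a := fun u => by
    rw [Prod.dist_eq]; exact le_max_left _ _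
  have snd_le : ∀ u : Plane × Plane, dist u.2 a.2 ≤ dist u a := fun u => by
    rw [Prod.dist_eq]; exact le_max_right _ _
  have key0 : dist ((h : Isom) (B 0 + p)) ((h' : Isom) (B 0 + p)) < δ := by
    calc dist ((h : Isom) (B 0 + p)) ((h' : Isom) (B 0 + p))
        ≤ dist ((h : Isom) (B 0 + p)) a.1 + dist ((h' : Isom) (B 0 + p)) a.1 :=
          dist_triangle_right _ _ _
      _ ≤ dist (x (φ N)) a + dist (x (φ (N + 1))) a :=
          add_le_add (fst_le (x (φ N))) (fst_le (x (φ (N + 1))))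
      _ < δ / 2 + δ / 2 := add_lt_add hdN hdN1
      _ = δ := by ring
  have key1 : dist ((h : Isom) (B 1 + p)) ((h' : Isom) (B 1 + p)) < δ := by
    calc dist ((h : Isom) (B 1 + p)) ((h' : Isom) (B 1 + p))
        ≤ dist ((h : Isom) (B 1 + p)) a.2 + dist ((h' : Isom) (B 1 + p)) a.2 :=
          dist_triangle_right _ _ _
      _ ≤ dist (x (φ N)) a + dist (x (φ (N + 1))) a :=
          add_le_add (snd_le (x (φ N))) (snd_le (x (φ (N + 1))))
      _ < δ / 2 + δ / 2 := add_lt_add hdN hdN1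
      _ = δ := by ring
  refine ⟨(h' : Isom)⁻¹ * (h : Isom), mul_mem (inv_mem h'.2) h.2, ?_, ?_, ?_⟩
  · intro heq
    exact hne (inv_mul_eq_one.mp heq).symm
  · calc dist (((h' : Isom)⁻¹ * (h : Isom)) (B 0 + p)) (B 0 + p)
        = dist (((h' : Isom)⁻¹) ((h : Isom) (B 0 + p)))
            (((h' : Isom)⁻¹) ((h' : Isom) (B 0 + p))) := by
          rw [IsometryEquiv.mul_apply, IsometryEquiv.inv_apply_self]
      _ = dist ((h : Isom) (B 0 + p)) ((h' : Isom) (B 0 + p)) :=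
          IsometryEquiv.dist_eq _ _ _
      _ < δ := key0
  · calc dist (((h' : Isom)⁻¹ * (h : Isom)) (B 1 + p)) (B 1 + p)
        = dist (((h' : Isom)⁻¹) ((h : Isom) (B 1 + p)))
            (((h' : Isom)⁻¹) ((h' : Isom) (B 1 + p))) := by
          rw [IsometryEquiv.mul_apply, IsometryEquiv.inv_apply_self]
      _ = dist ((h : Isom) (B 1 + p)) ((h' : Isom) (B 1 + p)) :=
          IsometryEquiv.dist_eq _ _ _
      _ < δ := key1

lemma no_common_fixed (H : Subgroup Isom) (hinf : Infinite H)
    (hdisc : DiscreteTopology H) (p : Plane)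
    (hfix : ∀ g ∈ H, (g : Isom) p = p) : False := by
  obtain ⟨K, ε, hK, hε, hone⟩ := exists_nbhd H hdisc
  obtain ⟨R, hR⟩ := hK.isBounded.subset_closedBall p
  set R' : ℝ := max R 1 with hR'
  have hR'pos : (0:ℝ) < R' := lt_of_lt_of_le one_pos (le_max_right _ _)
  set δ : ℝ := ε / (2 * R' + 1) with hδdef
  have hδ : 0 < δ := by positivity
  obtain ⟨g, hg, hgne, hg0, hg1⟩ := exists_small H hinf p hfix δ hδ
  apply hgne
  apply hone g hg
  intro x hx
  have hxR : ‖x - p‖ ≤ R' := by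
    have := hR hx
    rw [Metric.mem_closedBall, dist_eq_norm] at this
    exact le_trans this (le_max_left _ _)
  have hest := estimate g p (hfix g hg) δ R' (le_of_lt hR'pos)
    (le_of_lt hg0) (le_of_lt hg1) x hxR
  calc dist (g x) x ≤ 2 * R' * δ := hest
    _ = 2 * R' * ε / (2 * R' + 1) := by rw [hδdef]; ring
    _ < ε := by
        rw [div_lt_iff₀ (by positivity : (0:ℝ) < 2 * R' + 1)]
        nlinarith


/-- An infinite discrete abelian torsion-free group of isometries of `ℝ²` is
generated by translations and glide reflections; in particular it contains a
translation. -/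
theorem abelian_torsionfree_generated_by_translations_glides
    (H : Subgroup Isom) (hinf : Infinite H) (hdisc : DiscreteTopology H)
    (hab : ∀ f ∈ H, ∀ g ∈ H, f * g = g * f)
    (htf : ∀ f ∈ H, f ≠ 1 → ∀ n : ℕ, 0 < n → f ^ n ≠ 1) :
    Subgroup.closure {f : Isom | f ∈ H ∧ (IsTranslation f ∨ IsGlide f)} = H ∧
      ∃ f ∈ H, IsTranslation f := by
  have key : ∀ f ∈ H, f ≠ 1 → IsTranslation f ∨ IsGlide f := by
    intro f hf hne
    have hf2 : f * f ≠ 1 := by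
      have := htf f hf hne 2 (by norm_num)
      rwa [pow_two] at this
    rcases trichotomy f hne hf2 with h | h | ⟨p, hp, hup⟩
    · exact Or.inl h
    · exact Or.inr h
    · exfalso
      apply no_common_fixed H hinf hdisc p
      intro g hg
      apply hup
      calc f (g p) = (f * g) p := rfl
        _ = (g * f) p := by rw [hab f hf g hg]
        _ = g p := by rw [IsometryEquiv.mul_apply, hp]
  constructor
  · apply le_antisymm
    · exact (Subgroup.closure_le H).mpr (fun f hf => hf.1)
    · intro h hh
      by_cases h1 : h = 1
      · rw [h1]; exact Subgroup.one_mem _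
      · exact Subgroup.subset_closure ⟨hh, key h hh h1⟩
  · have : Nontrivial H := Infinite.instNontrivial H
    obtain ⟨x, hx⟩ := exists_ne (1 : H)
    have hne : (x : Isom) ≠ 1 := fun h => hx (Subtype.ext h)
    rcases key x x.2 hne with ht | hg
    · exact ⟨x, x.2, ht⟩
    · exact ⟨(x : Isom) * x, mul_mem x.2 x.2, hg.2⟩
end
end
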